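/- Let n ≥ 2, τ, o ∈ ℝⁿ, d_c > 0 with ‖o - τ‖ > 2·d_c, ε > 1/d_c, k₁ > 0, α ∈ (0,1), and define B(x) = ‖x - τ‖² / (‖x - o‖ - d_c + 1/ε). Let r > 0 and let D ⊆ ℝⁿ be a compact set with τ ∈ D, D ⊆ {x : ‖x - o‖ > d_c}, and D disjoint from {x : ∃ θ ≥ 1, ‖x - (τ + θ·(o - τ))‖ < r}. Let x : [0,∞) → ℝⁿ be differentiable with x(t) ∈ D for all t ≥ 0 and x'(t) = -k₁·∇B(x(t))·‖∇B(x(t))‖^(α-1) whenever ∇B(x(t)) ≠ 0, and x'(t) = 0 whenever ∇B(x(t)) = 0. Then there exists a finite T ≥ 0 such that x(t) = τ for all t ≥ T; moreover ‖x(t) - o‖ > d_c for all t ≥ 0. -/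

import Mathlib

set_option maxHeartbeats 1000000

open Real Set

variable {F : Type*} [NormedAddCommGroup F] [InnerProductSpace ℝ F] [CompleteSpace F]

lemma hasFDerivAt_norm_sub (o p : F) (h : p ≠ o) :
    HasFDerivAt (fun y => ‖y - o‖) (‖p - o‖⁻¹ • innerSL ℝ (p - o)) p := by
  have hpo : (0:ℝ) < ‖p - o‖ := by
    rw [norm_pos_iff, sub_ne_zero]; exact h
  have hq : HasFDerivAt (fun y : F => ‖y - o‖^2) (2 • innerSL ℝ (p - o)) p := by
    simpa using ((hasFDerivAt_id p).sub_const o).norm_sq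
  have hs : HasDerivAt Real.sqrt (1 / (2 * Real.sqrt (‖p - o‖^2))) (‖p - o‖^2) :=
    Real.hasDerivAt_sqrt (by positivity)
  have := hs.comp_hasFDerivAt p hq
  have he : (fun y : F => Real.sqrt (‖y - o‖^2)) = fun y => ‖y - o‖ :=
    funext fun y => Real.sqrt_sq (norm_nonneg _)
  rw [Function.comp_def, he] at this
  refine this.congr_fderiv ?_
  rw [Real.sqrt_sq hpo.le]
  ext v
  simp [smul_smul]
  ring

lemma hasGradientAt_barrier (τ o : F) (m : ℝ) (p : F) (hpo : p ≠ o)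
    (hg : 0 < ‖p - o‖ + m) :
    HasGradientAt (fun y : F => ‖y - τ‖^2 / (‖y - o‖ + m))
      ((((‖p-o‖+m)^2)⁻¹) • ((2*(‖p-o‖+m)) • (p - τ) - (‖p-τ‖^2 * ‖p-o‖⁻¹) • (p - o))) p := by
  have hN : HasFDerivAt (fun y : F => ‖y - τ‖^2) (2 • innerSL ℝ (p - τ)) p := by
    simpa using ((hasFDerivAt_id p).sub_const τ).norm_sq
  have hd : HasFDerivAt (fun y : F => ‖y - o‖ + m) (‖p - o‖⁻¹ • innerSL ℝ (p - o)) p :=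
    (hasFDerivAt_norm_sub o p hpo).add_const m
  have hinv : HasDerivAt (fun s : ℝ => s⁻¹) (-(((‖p - o‖ + m))^2)⁻¹) (‖p - o‖ + m) :=
    hasDerivAt_inv hg.ne'
  have h1 : HasFDerivAt (fun y : F => (‖y - o‖ + m)⁻¹)
      ((-(((‖p - o‖ + m))^2)⁻¹) • (‖p - o‖⁻¹ • innerSL ℝ (p - o))) p := by
    simpa [Function.comp_def] using hinv.comp_hasFDerivAt p hd
  have hmul := hN.mul h1
  rw [hasGradientAt_iff_hasFDerivAt]
  have hfe : (fun y : F => ‖y - τ‖^2 / (‖y - o‖ + m))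
      = fun y : F => ‖y - τ‖^2 * (‖y - o‖ + m)⁻¹ := by
    funext y; rw [div_eq_mul_inv]
  rw [hfe]
  refine hmul.congr_fderiv ?_
  ext v
  simp only [InnerProductSpace.toDual_apply_apply, InnerProductSpace.toDualMap_apply_apply, ContinuousLinearMap.add_apply,
    ContinuousLinearMap.smul_apply, innerSL_apply_apply, ContinuousLinearMap.coe_smul',
    Pi.smul_apply, inner_smul_left, inner_sub_left, inner_smul_left, smul_eq_mul,
    conj_trivial, two_smul, ContinuousLinearMap.add_apply, real_inner_smul_left]
  have hne : (‖p - o‖ + m) ≠ 0 := hg.ne'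
  have hno : ‖p - o‖ ≠ 0 := by rw [norm_ne_zero_iff, sub_ne_zero]; exact hpo
  field_simp
  ring

lemma crit_lemma (τ o : F) (dc ε : ℝ) (hdc : 0 < dc) (hsep : 2 * dc < ‖o - τ‖)
    (hε : 1 / dc < ε) (p : F) (hpsafe : dc < ‖p - o‖) (hpτ : p ≠ τ)
    (hG : (2*(‖p-o‖+(1/ε-dc))) • (p - τ) - (‖p-τ‖^2 * ‖p-o‖⁻¹) • (p - o) = 0) :
    ∃ θ : ℝ, 1 ≤ θ ∧ p = τ + θ • (o - τ) := by
  have hε0 : (0:ℝ) < ε := lt_trans (by positivity) hε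
  have h1ε : 1 / ε < dc := by
    rw [div_lt_iff₀ hε0]
    rw [div_lt_iff₀ hdc] at hε
    nlinarith
  set a : F := p - τ with ha
  set b : F := p - o with hb
  have hbn : (0:ℝ) < ‖b‖ := lt_trans hdc hpsafe
  have han : (0:ℝ) < ‖a‖ := by
    rw [norm_pos_iff, ha, sub_ne_zero]; exact hpτ
  set g : ℝ := ‖b‖ + (1/ε - dc) with hgdef
  have hgpos : 0 < g := by
    have : 0 < 1/ε := by positivity
    simp only [hgdef]; nlinarith
  have heq : (2*g) • a = (‖a‖^2 * ‖b‖⁻¹) • b := by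
    rw [sub_eq_zero] at hG; exact hG
  -- taking norms
  have hnorm : 2*g*‖a‖ = ‖a‖^2 := by
    have := congrArg norm heq
    rw [norm_smul, norm_smul] at this
    rw [Real.norm_eq_abs, Real.norm_eq_abs, abs_of_pos (by positivity),
      abs_of_pos (by positivity)] at this
    rw [this]
    field_simp
  have hA : ‖a‖ = 2*g := by
    have h2 : ‖a‖ * (2*g) = ‖a‖ * ‖a‖ := by nlinarith [hnorm]
    exact ((mul_left_cancel₀ han.ne' h2)).symm
  -- b is a positive multiple of a
  set μ : ℝ := ‖b‖ / ‖a‖ with hμ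
  have hμpos : 0 < μ := by positivity
  have hba : b = μ • a := by
    have hc2 : (0:ℝ) < ‖a‖^2 * ‖b‖⁻¹ := by positivity
    have h3 := congrArg (fun v => (‖a‖^2 * ‖b‖⁻¹)⁻¹ • v) heq
    simp only [smul_smul, inv_mul_cancel₀ hc2.ne'] at h3
    rw [one_smul] at h3
    have hsc : (‖a‖^2 * ‖b‖⁻¹)⁻¹ * (2*g) = μ := by
      rw [hμ, hA]
      field_simp
    rw [← h3, hsc]
  set s : ℝ := 1 - μ with hs
  have hoτ : o - τ = s • a := by
    have : o - τ = a - b := by rw [ha, hb]; abel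
    rw [this, hba, hs, sub_smul, one_smul]
  have hoτn : (0:ℝ) < ‖o - τ‖ := by nlinarith [hsep]
  have hsne : s ≠ 0 := by
    intro h
    rw [h, zero_smul] at hoτ
    rw [hoτ, norm_zero] at hoτn
    exact lt_irrefl 0 hoτn
  clear_value a b g μ s
  rcases lt_or_gt_of_ne hsne with hsneg | hspos
  · -- s < 0 : contradiction
    exfalso
    have hbnorm : ‖b‖ = (1 - s)*‖a‖ := by
      rw [hba, norm_smul, Real.norm_eq_abs, abs_of_pos hμpos]
      simp only [hs]; ring
    have hkey : ‖a‖ = 2*((1-s)*‖a‖) + 2*(1/ε - dc) := by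
      have h1 := hA
      rw [hgdef, hbnorm] at h1
      nlinarith [h1]
    have hon : ‖o - τ‖ = (-s) * ‖a‖ := by
      rw [hoτ, norm_smul, Real.norm_eq_abs, abs_of_neg hsneg]
    have h1e : (0:ℝ) < 1/ε := by positivity
    ring_nf at hkey hon
    linarith [hkey, hon, hsep, han, hdc, h1e]
  · -- 0 < s : p is on the ray
    have hslt1 : s < 1 := by simp only [hs]; linarith
    refine ⟨s⁻¹, ?_, ?_⟩
    · nlinarith [mul_inv_cancel₀ hsne,
        mul_nonneg (by linarith : (0:ℝ) ≤ 1 - s) (inv_pos.mpr hspos).le]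
    · have hae : a = s⁻¹ • (o - τ) := by
        rw [hoτ, smul_smul, inv_mul_cancel₀ hsne, one_smul]
      rw [← hae]
      rw [ha]; abel

noncomputable def bg (τ o : F) (m : ℝ) (p : F) : F :=
  (((‖p-o‖+m)^2)⁻¹) • ((2*(‖p-o‖+m)) • (p - τ) - (‖p-τ‖^2 * ‖p-o‖⁻¹) • (p - o))

lemma bg_lower (τ o : F) (dc ε r : ℝ) (hdc : 0 < dc) (hsep : 2 * dc < ‖o - τ‖)
    (hε : 1 / dc < ε) (hr : 0 < r)
    (D : Set F) (hDc : IsCompact D)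
    (hDsafe : D ⊆ {x | dc < ‖x - o‖})
    (hDray : Disjoint D {x | ∃ θ : ℝ, 1 ≤ θ ∧ ‖x - (τ + θ • (o - τ))‖ < r}) :
    ∃ c > 0, ∀ p ∈ D, c * ‖p - τ‖ ≤ ‖bg τ o (1/ε - dc) p‖ := by
  have hε0 : (0:ℝ) < ε := lt_trans (by positivity) hε
  set m : ℝ := 1/ε - dc with hm
  -- bounds on D
  obtain ⟨M, hM⟩ := hDc.isBounded.exists_norm_le
  set gM : ℝ := max (M + ‖o‖ + m) 1 with hgM
  have hgM0 : (0:ℝ) < gM := lt_of_lt_of_le one_pos (le_max_right _ _)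
  set R2 : ℝ := max (M + ‖τ‖) 1 with hR2
  have hR20 : (0:ℝ) < R2 := lt_of_lt_of_le one_pos (le_max_right _ _)
  have hgbound : ∀ p ∈ D, ‖p - o‖ + m ≤ gM := by
    intro p hp
    have := norm_sub_le p o
    have := hM p hp
    calc ‖p - o‖ + m ≤ M + ‖o‖ + m := by linarith [norm_sub_le p o]
    _ ≤ gM := le_max_left _ _
  have hgpos : ∀ p ∈ D, 1/ε < ‖p - o‖ + m := by
    intro p hp
    have := hDsafe hp
    simp only [Set.mem_setOf_eq] at this
    simp only [hm]; linarith
  have h1ε : (0:ℝ) < 1/ε := by positivity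
  have haR : ∀ p ∈ D, ‖p - τ‖ ≤ R2 := by
    intro p hp
    calc ‖p - τ‖ ≤ M + ‖τ‖ := by linarith [norm_sub_le p τ, hM p hp]
    _ ≤ R2 := le_max_left _ _
  -- the "near τ" estimate
  have hnear : ∀ p ∈ D, ‖p - τ‖ ≤ 1/ε →
      ((gM^2)⁻¹ * (1/ε)) * ‖p - τ‖ ≤ ‖bg τ o m p‖ := by
    intro p hp hpn
    have hb0 : (0:ℝ) < ‖p - o‖ := lt_trans hdc (hDsafe hp)
    have hgp : 1/ε < ‖p - o‖ + m := hgpos p hp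
    have hgple : ‖p - o‖ + m ≤ gM := hgbound p hp
    have hgp0 : (0:ℝ) < ‖p - o‖ + m := lt_trans h1ε hgp
    rw [bg, norm_smul, Real.norm_eq_abs, abs_of_pos (inv_pos.mpr (pow_pos hgp0 2))]
    have hw : ‖(‖p-τ‖^2 * ‖p-o‖⁻¹) • (p - o)‖ = ‖p-τ‖^2 := by
      rw [norm_smul, Real.norm_eq_abs, abs_of_nonneg (by positivity)]
      field_simp
    have htri : (2*(‖p-o‖+m)) * ‖p - τ‖ - ‖p-τ‖^2
        ≤ ‖(2*(‖p-o‖+m)) • (p - τ) - (‖p-τ‖^2 * ‖p-o‖⁻¹) • (p - o)‖ := by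
      calc (2*(‖p-o‖+m)) * ‖p - τ‖ - ‖p-τ‖^2
          = ‖(2*(‖p-o‖+m)) • (p - τ)‖ - ‖(‖p-τ‖^2 * ‖p-o‖⁻¹) • (p - o)‖ := by
            rw [hw, norm_smul, Real.norm_eq_abs, abs_of_pos (by nlinarith)]
      _ ≤ _ := norm_sub_norm_le _ _
    have h1 : (1/ε) * ‖p - τ‖ ≤ (2*(‖p-o‖+m)) * ‖p - τ‖ - ‖p-τ‖^2 := by
      nlinarith [norm_nonneg (p - τ)]
    have h2 : (gM^2)⁻¹ ≤ ((‖p-o‖+m)^2)⁻¹ := by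
      apply inv_anti₀ (pow_pos hgp0 2)
      nlinarith
    calc ((gM^2)⁻¹ * (1/ε)) * ‖p - τ‖ ≤ ((‖p-o‖+m)^2)⁻¹ * ((1/ε) * ‖p - τ‖) := by
          nlinarith [norm_nonneg (p - τ), mul_nonneg h1ε.le (norm_nonneg (p - τ))]
    _ ≤ ((‖p-o‖+m)^2)⁻¹ * ‖(2*(‖p-o‖+m)) • (p - τ) - (‖p-τ‖^2 * ‖p-o‖⁻¹) • (p - o)‖ := by
          have := le_trans h1 htri
          exact mul_le_mul_of_nonneg_left this (by positivity)
  -- the "far" part via compactness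
  set K : Set F := D ∩ {p | 1/ε ≤ ‖p - τ‖} with hK
  have hKc : IsCompact K := hDc.inter_right (isClosed_le continuous_const
    ((continuous_id.sub continuous_const).norm))
  by_cases hKe : K = ∅
  · refine ⟨(gM^2)⁻¹ * (1/ε), by positivity, fun p hp => ?_⟩
    apply hnear p hp
    by_contra hlt
    push_neg at hlt
    have : p ∈ K := ⟨hp, le_of_lt hlt⟩
    rw [hKe] at this
    exact this
  · have hKne : K.Nonempty := Set.nonempty_iff_ne_empty.mpr hKe
    have hcont : ContinuousOn (fun p => ‖bg τ o m p‖) K := by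
      have hno : ∀ p ∈ K, ‖p - o‖ ≠ 0 := fun p hp =>
        (lt_trans hdc (hDsafe hp.1)).ne'
      have hgne : ∀ p ∈ K, ((‖p - o‖ + m)^2 : ℝ) ≠ 0 := fun p hp =>
        (pow_pos (lt_trans h1ε (hgpos p hp.1)) 2).ne'
      apply ContinuousOn.norm
      unfold bg
      apply ContinuousOn.smul
      · apply ContinuousOn.inv₀
        · exact (((continuous_id.sub continuous_const).norm.add
            continuous_const).pow 2).continuousOn
        · exact hgne
      · apply ContinuousOn.sub
        · apply ContinuousOn.smul
          · exact (continuous_const.mul ((continuous_id.sub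
              continuous_const).norm.add continuous_const)).continuousOn
          · exact (continuous_id.sub continuous_const).continuousOn
        · apply ContinuousOn.smul
          · apply ContinuousOn.mul
            · exact ((continuous_id.sub continuous_const).norm.pow 2).continuousOn
            · exact ContinuousOn.inv₀
                (continuous_id.sub continuous_const).norm.continuousOn hno
          · exact (continuous_id.sub continuous_const).continuousOn
    obtain ⟨p0, hp0K, hp0min⟩ := hKc.exists_isMinOn hKne hcont
    have hm0 : 0 < ‖bg τ o m p0‖ := by
      rw [norm_pos_iff]
      intro hbg0
      have hp0τ : p0 ≠ τ := by
        intro h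
        have := hp0K.2
        rw [h] at this
        simp only [Set.mem_setOf_eq, sub_self, norm_zero] at this
        linarith
      have hvec : (2*(‖p0-o‖+(1/ε-dc))) • (p0 - τ) - (‖p0-τ‖^2 * ‖p0-o‖⁻¹) • (p0 - o) = 0 := by
        have hgne : (((‖p0 - o‖ + m)^2)⁻¹ : ℝ) ≠ 0 := by
          have h := lt_trans h1ε (hgpos p0 hp0K.1)
          exact inv_ne_zero (pow_pos h 2).ne'
        rw [bg] at hbg0
        rcases smul_eq_zero.mp hbg0 with h | h
        · exact absurd h hgne
        · exact h
      obtain ⟨θ, hθ1, hθ⟩ := crit_lemma τ o dc ε hdc hsep hε p0 (hDsafe hp0K.1) hp0τ hvec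
      have : p0 ∈ {x : F | ∃ θ : ℝ, 1 ≤ θ ∧ ‖x - (τ + θ • (o - τ))‖ < r} := by
        exact ⟨θ, hθ1, by rw [hθ, sub_self, norm_zero]; exact hr⟩
      exact (hDray.ne_of_mem hp0K.1 this) rfl
    set c2 : ℝ := ‖bg τ o m p0‖ / R2 with hc2
    have hc20 : 0 < c2 := by positivity
    refine ⟨min ((gM^2)⁻¹ * (1/ε)) c2, lt_min (by positivity) hc20, fun p hp => ?_⟩
    by_cases hpn : ‖p - τ‖ ≤ 1/ε
    · calc min ((gM^2)⁻¹ * (1/ε)) c2 * ‖p - τ‖ ≤ ((gM^2)⁻¹ * (1/ε)) * ‖p - τ‖ :=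
        mul_le_mul_of_nonneg_right (min_le_left _ _) (norm_nonneg _)
      _ ≤ _ := hnear p hp hpn
    · push_neg at hpn
      have hpK : p ∈ K := ⟨hp, hpn.le⟩
      have hmin := hp0min hpK
      calc min ((gM^2)⁻¹ * (1/ε)) c2 * ‖p - τ‖ ≤ c2 * ‖p - τ‖ :=
        mul_le_mul_of_nonneg_right (min_le_right _ _) (norm_nonneg _)
      _ ≤ c2 * R2 := mul_le_mul_of_nonneg_left (haR p hp) hc20.le
      _ = ‖bg τ o m p0‖ := by rw [hc2, div_mul_cancel₀ _ hR20.ne']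
      _ ≤ ‖bg τ o m p‖ := hmin

lemma finite_time (V : ℝ → ℝ) (K β : ℝ) (hK : 0 < K) (hβ0 : 0 < β) (hβ1 : β < 1)
    (hV0 : ∀ t, 0 ≤ t → 0 ≤ V t)
    (hV' : ∀ t, 0 ≤ t → ∃ v, HasDerivAt V v t ∧ v ≤ -(K * (V t)^β)) :
    ∃ T, 0 ≤ T ∧ ∀ t, T ≤ t → V t = 0 := by
  have hVcont : ContinuousOn V (Set.Ici 0) := fun t ht => by
    obtain ⟨v, hv, _⟩ := hV' t ht
    exact hv.continuousAt.continuousWithinAt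
  have hVanti : AntitoneOn V (Set.Ici 0) := by
    apply antitoneOn_of_deriv_nonpos (convex_Ici 0) hVcont
    · intro t ht
      rw [interior_Ici] at ht
      obtain ⟨v, hv, _⟩ := hV' t (le_of_lt ht)
      exact hv.differentiableAt.differentiableWithinAt
    · intro t ht
      rw [interior_Ici] at ht
      obtain ⟨v, hv, hvle⟩ := hV' t (le_of_lt ht)
      rw [hv.deriv]
      have : 0 ≤ K * (V t)^β :=
        mul_nonneg hK.le (Real.rpow_nonneg (hV0 t ht.le) β)
      linarith
  set T : ℝ := (V 0)^(1-β) / (K*(1-β)) with hT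
  have hKβ : 0 < K*(1-β) := mul_pos hK (by linarith)
  have hT0 : 0 ≤ T := div_nonneg (Real.rpow_nonneg (hV0 0 le_rfl) _) hKβ.le
  have hVT : V T = 0 := by
    by_contra hne
    have hVTpos : 0 < V T := lt_of_le_of_ne (hV0 T hT0) (Ne.symm hne)
    have hVpos : ∀ t ∈ Set.Icc 0 T, 0 < V t := fun t ht =>
      lt_of_lt_of_le hVTpos (hVanti (Set.mem_Ici.mpr ht.1) (Set.mem_Ici.mpr hT0) ht.2)
    set φ : ℝ → ℝ := fun t => (V t)^(1-β) + K*(1-β)*t with hφ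
    have hφder : ∀ t ∈ Set.Icc (0:ℝ) T, ∃ d, d ≤ 0 ∧ HasDerivAt φ d t := by
      intro t ht
      obtain ⟨v, hv, hvle⟩ := hV' t ht.1
      have hVt := hVpos t ht
      have hW : HasDerivAt (fun u => (V u)^(1-β)) (v * (1-β) * (V t)^(1-β-1)) t :=
        hv.rpow_const (Or.inl hVt.ne')
      refine ⟨v * (1-β) * (V t)^(1-β-1) + K*(1-β), ?_, by
        simpa [hφ, Pi.add_def] using (hW.add ((hasDerivAt_id t).const_mul (K*(1-β))))⟩
      have hneg : (1:ℝ)-β-1 = -β := by ring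
      have hexp : (V t)^β * (V t)^(1-β-1) = 1 := by
        rw [hneg, ← Real.rpow_add hVt]
        simp
      have hrp : (0:ℝ) ≤ (V t)^(1-β-1) := Real.rpow_nonneg (hV0 t ht.1) _
      have h1 : v * (1-β) * (V t)^(1-β-1)
          ≤ -(K * (V t)^β) * (1-β) * (V t)^(1-β-1) := by
        have h2 : v * (V t)^(1-β-1) ≤ -(K * (V t)^β) * (V t)^(1-β-1) :=
          mul_le_mul_of_nonneg_right hvle hrp
        nlinarith
      have h3 : -(K * (V t)^β) * (1-β) * (V t)^(1-β-1) = -(K*(1-β)) := by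
        have : K * (1-β) * ((V t)^β * (V t)^(1-β-1)) = K * (1-β) * 1 := by rw [hexp]
        nlinarith [this]
      linarith [h1, h3.le]
    have hφanti : AntitoneOn φ (Set.Icc 0 T) := by
      apply antitoneOn_of_deriv_nonpos (convex_Icc 0 T)
      · intro t ht
        obtain ⟨d, _, hd⟩ := hφder t ht
        exact hd.continuousAt.continuousWithinAt
      · intro t ht
        rw [interior_Icc] at ht
        obtain ⟨d, _, hd⟩ := hφder t (Set.mem_Icc_of_Ioo ht)
        exact hd.differentiableAt.differentiableWithinAt
      · intro t ht
        rw [interior_Icc] at ht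
        obtain ⟨d, hd0, hd⟩ := hφder t (Set.mem_Icc_of_Ioo ht)
        rw [hd.deriv]; exact hd0
    have := hφanti (Set.left_mem_Icc.mpr hT0) (Set.right_mem_Icc.mpr hT0) hT0
    rw [hφ] at this
    simp only [mul_zero, add_zero] at this
    have hTeq : K*(1-β)*T = (V 0)^(1-β) := by
      rw [hT]; field_simp [(by linarith : (1:ℝ) - β ≠ 0)]
    have hpos : 0 < (V T)^(1-β) := Real.rpow_pos_of_pos hVTpos _
    linarith [this, hTeq, hpos]
  refine ⟨T, hT0, fun t htT => ?_⟩
  have ht0 : (0:ℝ) ≤ t := le_trans hT0 htT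
  have h1 : V t ≤ V T := hVanti (Set.mem_Ici.mpr hT0) (Set.mem_Ici.mpr ht0) htT
  have h2 : 0 ≤ V t := hV0 t ht0
  linarith [hVT ▸ h1]

lemma hasGradientAt_bg (τ o : F) (m : ℝ) (p : F) (hpo : p ≠ o)
    (hg : 0 < ‖p - o‖ + m) :
    HasGradientAt (fun y : F => ‖y - τ‖^2 / (‖y - o‖ + m)) (bg τ o m p) p := by
  unfold bg
  exact hasGradientAt_barrier τ o m p hpo hg

/-- Finite-time convergence and safety for the barrier-function controller: any
solution of `ẋ = -k₁·∇B(x)·‖∇B(x)‖^(α-1)` remaining in a compact set `D`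
(containing `τ`, inside the safe region, avoiding a neighborhood of the ray from
`τ` through `o` beyond `o`) reaches `τ` in finite time and stays safe. -/
theorem stmt_12 (n : ℕ) (hn : 2 ≤ n) (τ o : EuclideanSpace ℝ (Fin n))
    (dc ε k₁ α : ℝ) (hdc : 0 < dc) (hsep : 2 * dc < ‖o - τ‖) (hε : 1 / dc < ε)
    (hk₁ : 0 < k₁) (hα0 : 0 < α) (hα1 : α < 1)
    (B : EuclideanSpace ℝ (Fin n) → ℝ)
    (hB : ∀ y, B y = ‖y - τ‖ ^ 2 / (‖y - o‖ - dc + 1 / ε))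
    (r : ℝ) (hr : 0 < r)
    (D : Set (EuclideanSpace ℝ (Fin n))) (hDc : IsCompact D) (hτD : τ ∈ D)
    (hDsafe : D ⊆ {x | dc < ‖x - o‖})
    (hDray : Disjoint D {x | ∃ θ : ℝ, 1 ≤ θ ∧ ‖x - (τ + θ • (o - τ))‖ < r})
    (x : ℝ → EuclideanSpace ℝ (Fin n)) (hxD : ∀ t, 0 ≤ t → x t ∈ D)
    (hx : ∀ t, 0 ≤ t → gradient B (x t) ≠ 0 →
      HasDerivAt x ((-k₁ * ‖gradient B (x t)‖ ^ (α - 1)) • gradient B (x t)) t)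
    (hx0 : ∀ t, 0 ≤ t → gradient B (x t) = 0 → HasDerivAt x 0 t) :
    (∃ T : ℝ, 0 ≤ T ∧ ∀ t, T ≤ t → x t = τ) ∧ ∀ t, 0 ≤ t → dc < ‖x t - o‖ := by
  have hε0 : (0:ℝ) < ε := lt_trans (by positivity) hε
  have h1ε : (0:ℝ) < 1/ε := by positivity
  have hsafe : ∀ t, 0 ≤ t → dc < ‖x t - o‖ := fun t ht => hDsafe (hxD t ht)
  refine ⟨?_, hsafe⟩
  set m : ℝ := 1/ε - dc with hm
  have hBfun : B = fun y => ‖y - τ‖^2 / (‖y - o‖ + m) := by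
    funext y; rw [hB y]; congr 1; rw [hm]; ring
  have hgp : ∀ p ∈ D, 1/ε < ‖p - o‖ + m := fun p hp => by
    have h := hDsafe hp
    simp only [Set.mem_setOf_eq] at h
    rw [hm]; linarith
  have hpo : ∀ p ∈ D, p ≠ o := fun p hp h => by
    have h2 := hDsafe hp
    simp only [Set.mem_setOf_eq, h, sub_self, norm_zero] at h2
    linarith
  have hgrad : ∀ p ∈ D, HasGradientAt B (bg τ o m p) p := fun p hp => by
    rw [hBfun]
    exact hasGradientAt_bg τ o m p (hpo p hp) (lt_trans h1ε (hgp p hp))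
  have hgradeq : ∀ p ∈ D, gradient B p = bg τ o m p := fun p hp =>
    (hgrad p hp).gradient
  obtain ⟨c, hc0, hclow⟩ := bg_lower τ o dc ε r hdc hsep hε hr D hDc hDsafe hDray
  rw [← hm] at hclow
  clear_value m
  set β : ℝ := (α+1)/2 with hβ
  have hβ0 : 0 < β := by rw [hβ]; linarith
  have hβ1 : β < 1 := by rw [hβ]; linarith
  set K : ℝ := k₁ * c^(α+1) * (ε^β)⁻¹ with hK
  have hεβ : (0:ℝ) < ε^β := Real.rpow_pos_of_pos hε0 β
  have hK0 : 0 < K := mul_pos (mul_pos hk₁ (Real.rpow_pos_of_pos hc0 _))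
    (inv_pos.mpr hεβ)
  set V : ℝ → ℝ := fun t => B (x t) with hV
  have hVval : ∀ t, V t = ‖x t - τ‖^2 / (‖x t - o‖ + m) := fun t => by
    rw [hV]; simp only; rw [hBfun]
  have hV0 : ∀ t, 0 ≤ t → 0 ≤ V t := fun t ht => by
    rw [hVval t]
    exact div_nonneg (by positivity) (lt_trans h1ε (hgp (x t) (hxD t ht))).le
  have hVder : ∀ t, 0 ≤ t → HasDerivAt V (-(k₁ * ‖gradient B (x t)‖^(α+1))) t := by
    intro t ht
    have hp := hxD t ht
    have hfd : HasFDerivAt B (InnerProductSpace.toDual ℝ _ (bg τ o m (x t))) (x t) :=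
      hasGradientAt_iff_hasFDerivAt.mp (hgrad (x t) hp)
    by_cases h0 : gradient B (x t) = 0
    · have hx' := hx0 t ht h0
      have hcomp := hfd.comp_hasDerivAt t hx'
      simp only [map_zero] at hcomp
      have : -(k₁ * ‖gradient B (x t)‖^(α+1)) = 0 := by
        rw [h0, norm_zero, Real.zero_rpow (by linarith : α + 1 ≠ 0)]
        ring
      rw [this]
      exact hcomp
    · have hx' := hx t ht h0
      have hcomp := hfd.comp_hasDerivAt t hx'
      have heq : (InnerProductSpace.toDual ℝ _ (bg τ o m (x t)))
          ((-k₁ * ‖gradient B (x t)‖ ^ (α - 1)) • gradient B (x t))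
          = -(k₁ * ‖gradient B (x t)‖^(α+1)) := by
        rw [hgradeq (x t) hp] at h0 ⊢
        have hG0 : 0 < ‖bg τ o m (x t)‖ := norm_pos_iff.mpr h0
        rw [InnerProductSpace.toDual_apply_apply, real_inner_smul_right,
          real_inner_self_eq_norm_sq]
        have hrp : ‖bg τ o m (x t)‖^(α-1) * ‖bg τ o m (x t)‖^(2:ℕ)
            = ‖bg τ o m (x t)‖^(α+1) := by
          rw [← Real.rpow_natCast ‖bg τ o m (x t)‖ 2, ← Real.rpow_add hG0]
          congr 1
          push_cast
          ring
        push_cast at hrp ⊢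
        nlinarith [hrp]
      rw [← heq]
      exact hcomp
  have hVineq : ∀ t, 0 ≤ t → ∃ v, HasDerivAt V v t ∧ v ≤ -(K * (V t)^β) := by
    intro t ht
    refine ⟨_, hVder t ht, ?_⟩
    have hp := hxD t ht
    rw [hgradeq (x t) hp]
    have hgpp : 1/ε < ‖x t - o‖ + m := hgp (x t) hp
    have hgppos : (0:ℝ) < ‖x t - o‖ + m := lt_trans h1ε hgpp
    have hBle : V t ≤ ε * ‖x t - τ‖^2 := by
      rw [hVval t, div_le_iff₀ hgppos]
      have h1 : ε * (1/ε) = 1 := by field_simp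
      have h2 : ε * (1/ε) < ε * (‖x t - o‖ + m) :=
        mul_lt_mul_of_pos_left hgpp hε0
      nlinarith [sq_nonneg ‖x t - τ‖]
    have h1 : (V t)^β ≤ ε^β * (‖x t - τ‖^(2:ℝ))^β := by
      calc (V t)^β ≤ (ε * ‖x t - τ‖^2)^β :=
        Real.rpow_le_rpow (hV0 t ht) hBle hβ0.le
      _ = ε^β * (‖x t - τ‖^(2:ℝ))^β := by
          rw [Real.mul_rpow hε0.le (by positivity)]
          congr 2
          norm_cast
      _ = _ := rfl
    have h2 : (‖x t - τ‖^(2:ℝ))^β = ‖x t - τ‖^(α+1) := by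
      rw [← Real.rpow_mul (norm_nonneg _)]
      congr 1
      rw [hβ]; ring
    have h3 : c^(α+1) * ‖x t - τ‖^(α+1) ≤ ‖bg τ o m (x t)‖^(α+1) := by
      rw [← Real.mul_rpow hc0.le (norm_nonneg _)]
      exact Real.rpow_le_rpow (by positivity) (hclow (x t) hp) (by linarith)
    have hstep : K * (V t)^β ≤ k₁ * ‖bg τ o m (x t)‖^(α+1) := by
      calc K * (V t)^β ≤ K * (ε^β * ‖x t - τ‖^(α+1)) := by
            apply mul_le_mul_of_nonneg_left _ hK0.le
            rw [← h2]; exact h1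
      _ = k₁ * (c^(α+1) * ‖x t - τ‖^(α+1)) := by
            rw [hK]; field_simp
      _ ≤ k₁ * ‖bg τ o m (x t)‖^(α+1) := mul_le_mul_of_nonneg_left h3 hk₁.le
    linarith
  obtain ⟨T, hT0, hTz⟩ := finite_time V K β hK0 hβ0 hβ1 hV0 hVineq
  refine ⟨T, hT0, fun t htT => ?_⟩
  have ht0 : (0:ℝ) ≤ t := le_trans hT0 htT
  have hVt : ‖x t - τ‖^2 / (‖x t - o‖ + m) = 0 := by
    rw [← hVval t]; exact hTz t htT
  have hden : ‖x t - o‖ + m ≠ 0 := (lt_trans h1ε (hgp (x t) (hxD t ht0))).ne'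
  have hnum : ‖x t - τ‖^2 = 0 := by
    rcases div_eq_zero_iff.mp hVt with h | h
    · exact h
    · exact absurd h hden
  have : ‖x t - τ‖ = 0 := by
    have := sq_eq_zero_iff.mp hnum
    exact this
  rw [norm_eq_zero, sub_eq_zero] at this
  exact this
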